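/- (Perturbation of the Riccati solution P_K.) Let ρ ∈ (0, 1/√γ) and assume σ_min(B) > 0. Suppose K* ∈ ℝ^{k×n} satisfies ‖A−BK*‖ ≤ ρ and K* = γ(R + γBᵀP_{K*}B)⁻¹BᵀP_{K*}A; set Σ* := (τ/2)(R + γBᵀP_{K*}B)⁻¹ and S* := S_{K*,Σ*}. Define κ := (ρ + ‖A‖)/σ_min(B), ξ_{γ,ρ} := (1−γρ²+γ)/(1−γρ²)², and c := 2ρ·ξ_{γ,ρ}·‖B‖·(‖Q‖ + ‖R‖κ²) + (1/μ)·‖S*‖·‖R‖·(κ + ‖K*‖). Then for every K ∈ ℝ^{k×n} with ‖A−BK‖ ≤ ρ, one has ‖P_K − P_{K*}‖ ≤ c·‖K − K*‖. -/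

import Mathlib

open Matrix


noncomputable def spec {m l : ℕ} (M : Matrix (Fin m) (Fin l) ℝ) : ℝ :=
  ‖LinearMap.toContinuousLinearMap (Matrix.toEuclideanLin M)‖

noncomputable def sigMin {m l : ℕ} (M : Matrix (Fin m) (Fin l) ℝ) : ℝ :=
  sInf {r : ℝ | ∃ x : EuclideanSpace ℝ (Fin l), ‖x‖ = 1 ∧
    r = ‖LinearMap.toContinuousLinearMap (Matrix.toEuclideanLin M) x‖}

noncomputable def frob {m l : ℕ} (M : Matrix (Fin m) (Fin l) ℝ) : ℝ :=
  Real.sqrt (Matrix.trace (Mᵀ * M))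

def loewner {m : ℕ} (X Y : Matrix (Fin m) (Fin m) ℝ) : Prop :=
  (Y - X).PosSemidef

noncomputable def Pmat {n k : ℕ} (γ : ℝ) (A : Matrix (Fin n) (Fin n) ℝ)
    (B : Matrix (Fin n) (Fin k) ℝ) (Q : Matrix (Fin n) (Fin n) ℝ)
    (R : Matrix (Fin k) (Fin k) ℝ) (K : Matrix (Fin k) (Fin n) ℝ) :
    Matrix (Fin n) (Fin n) ℝ :=
  ∑' t : ℕ, γ ^ t • (((A - B * K)ᵀ) ^ t * (Q + Kᵀ * R * K) * (A - B * K) ^ t)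

noncomputable def Emat {n k : ℕ} (γ : ℝ) (A : Matrix (Fin n) (Fin n) ℝ)
    (B : Matrix (Fin n) (Fin k) ℝ) (Q : Matrix (Fin n) (Fin n) ℝ)
    (R : Matrix (Fin k) (Fin k) ℝ) (K : Matrix (Fin k) (Fin n) ℝ) :
    Matrix (Fin k) (Fin n) ℝ :=
  -(γ • (Bᵀ * Pmat γ A B Q R K * (A - B * K))) + R * K

noncomputable def Smat {n k : ℕ} (γ : ℝ) (A : Matrix (Fin n) (Fin n) ℝ)
    (B : Matrix (Fin n) (Fin k) ℝ) (W : Matrix (Fin n) (Fin n) ℝ)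
    (D₀ : Matrix (Fin n) (Fin n) ℝ) (K : Matrix (Fin k) (Fin n) ℝ)
    (Sg : Matrix (Fin k) (Fin k) ℝ) : Matrix (Fin n) (Fin n) ℝ :=
  ∑' t : ℕ, γ ^ t •
    ((A - B * K) ^ t * D₀ * ((A - B * K)ᵀ) ^ t +
      ∑ s ∈ Finset.Icc 1 t,
        (A - B * K) ^ (t - s) * (B * Sg * Bᵀ + W) * ((A - B * K)ᵀ) ^ (t - s))

noncomputable def Cost {n k : ℕ} (γ τ : ℝ) (A : Matrix (Fin n) (Fin n) ℝ)
    (B : Matrix (Fin n) (Fin k) ℝ) (Q : Matrix (Fin n) (Fin n) ℝ)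
    (R : Matrix (Fin k) (Fin k) ℝ) (W : Matrix (Fin n) (Fin n) ℝ)
    (D₀ : Matrix (Fin n) (Fin n) ℝ) (K : Matrix (Fin k) (Fin n) ℝ)
    (Sg : Matrix (Fin k) (Fin k) ℝ) : ℝ :=
  Matrix.trace (D₀ * Pmat γ A B Q R K) +
    (1 / (1 - γ)) *
      (Matrix.trace (Sg * (R + γ • (Bᵀ * Pmat γ A B Q R K * B))) -
        (τ / 2) * ((k : ℝ) + Real.log ((2 * Real.pi) ^ k * Sg.det)) +
        γ * Matrix.trace (W * Pmat γ A B Q R K))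

noncomputable def fent {n k : ℕ} (γ τ : ℝ) (A : Matrix (Fin n) (Fin n) ℝ)
    (B : Matrix (Fin n) (Fin k) ℝ) (Q : Matrix (Fin n) (Fin n) ℝ)
    (R : Matrix (Fin k) (Fin k) ℝ) (K : Matrix (Fin k) (Fin n) ℝ)
    (Sg : Matrix (Fin k) (Fin k) ℝ) : ℝ :=
  (τ / (2 * (1 - γ))) * Real.log Sg.det -
    (1 / (1 - γ)) * Matrix.trace (Sg * (R + γ • (Bᵀ * Pmat γ A B Q R K * B)))


namespace SpecAux

noncomputable def Phi {m l : ℕ} : Matrix (Fin m) (Fin l) ℝ ≃ₗ[ℝ]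
    (EuclideanSpace ℝ (Fin l) →L[ℝ] EuclideanSpace ℝ (Fin m)) :=
  Matrix.toEuclideanLin.trans LinearMap.toContinuousLinearMap

lemma spec_eq {m l : ℕ} (M : Matrix (Fin m) (Fin l) ℝ) : spec M = ‖Phi M‖ := rfl

lemma Phi_apply {m l : ℕ} (M : Matrix (Fin m) (Fin l) ℝ) (x : EuclideanSpace ℝ (Fin l)) :
    Phi M x = Matrix.toEuclideanLin M x := rfl

lemma Phi_mul {m l p : ℕ} (M : Matrix (Fin m) (Fin l) ℝ) (N : Matrix (Fin l) (Fin p) ℝ) :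
    Phi (M * N) = (Phi M).comp (Phi N) := by
  ext x
  simp [Phi_apply, Matrix.toEuclideanLin_eq_toLin, Matrix.toLin_mul
    (PiLp.basisFun 2 ℝ (Fin p)) (PiLp.basisFun 2 ℝ (Fin l)) (PiLp.basisFun 2 ℝ (Fin m))]

lemma spec_nonneg {m l : ℕ} (M : Matrix (Fin m) (Fin l) ℝ) : 0 ≤ spec M := norm_nonneg _

lemma spec_mul_le {m l p : ℕ} (M : Matrix (Fin m) (Fin l) ℝ) (N : Matrix (Fin l) (Fin p) ℝ) :
    spec (M * N) ≤ spec M * spec N := by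
  rw [spec_eq, spec_eq, spec_eq, Phi_mul]; exact ContinuousLinearMap.opNorm_comp_le _ _

lemma spec_add_le {m l : ℕ} (M N : Matrix (Fin m) (Fin l) ℝ) :
    spec (M + N) ≤ spec M + spec N := by
  rw [spec_eq, spec_eq, spec_eq, map_add]; exact norm_add_le _ _

lemma spec_smul {m l : ℕ} (c : ℝ) (M : Matrix (Fin m) (Fin l) ℝ) :
    spec (c • M) = |c| * spec M := by
  rw [spec_eq, spec_eq, _root_.map_smul]
  rw [show |c| = ‖c‖ from (Real.norm_eq_abs c).symm]
  exact norm_smul c (Phi M)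

lemma spec_transpose {m l : ℕ} (M : Matrix (Fin m) (Fin l) ℝ) : spec Mᵀ = spec M := by
  have h : Mᵀ = Mᴴ := (Matrix.conjTranspose_eq_transpose_of_trivial M).symm
  rw [spec_eq, spec_eq, h]
  show ‖LinearMap.toContinuousLinearMap (Matrix.toEuclideanLin Mᴴ)‖ = _
  rw [Matrix.toEuclideanLin_conjTranspose_eq_adjoint, LinearMap.adjoint_toContinuousLinearMap]
  exact ContinuousLinearMap.adjoint.norm_map (LinearMap.toContinuousLinearMap (Matrix.toEuclideanLin M))

end SpecAux

namespace SpecAux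

noncomputable def Phic {m l : ℕ} : Matrix (Fin m) (Fin l) ℝ ≃L[ℝ]
    (EuclideanSpace ℝ (Fin l) →L[ℝ] EuclideanSpace ℝ (Fin m)) :=
  Phi.toContinuousLinearEquiv

lemma Phic_eq {m l : ℕ} (M : Matrix (Fin m) (Fin l) ℝ) : Phic M = Phi M := rfl

lemma spec_sub_le {m l : ℕ} (M N : Matrix (Fin m) (Fin l) ℝ) :
    spec (M - N) ≤ spec M + spec N := by
  rw [spec_eq, spec_eq, spec_eq, map_sub]; exact norm_sub_le _ _

lemma spec_one_le {m : ℕ} : spec (1 : Matrix (Fin m) (Fin m) ℝ) ≤ 1 := by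
  rw [spec_eq]
  apply ContinuousLinearMap.opNorm_le_bound _ zero_le_one
  intro x
  have h : Phi (1 : Matrix (Fin m) (Fin m) ℝ) x = x := by
    apply (WithLp.equiv 2 _).injective
    simp [Phi_apply, Matrix.toEuclideanLin_apply]
  rw [h, one_mul]

lemma spec_pow_le {m : ℕ} (M : Matrix (Fin m) (Fin m) ℝ) (t : ℕ) (c : ℝ)
    (hc : spec M ≤ c) (hc0 : 0 ≤ c) : spec (M ^ t) ≤ c ^ t := by
  induction t with
  | zero => simpa [pow_zero] using spec_one_le
  | succ t ih =>
      calc spec (M ^ (t+1)) = spec (M ^ t * M) := by rw [pow_succ]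
      _ ≤ spec (M ^ t) * spec M := spec_mul_le _ _
      _ ≤ c ^ t * c := by
          apply mul_le_mul ih hc (spec_nonneg M) (pow_nonneg hc0 t)
      _ = c ^ (t+1) := (pow_succ _ _).symm

lemma summable_of_spec_summable {m l : ℕ} {f : ℕ → Matrix (Fin m) (Fin l) ℝ}
    {g : ℕ → ℝ} (hg : Summable g) (hle : ∀ t, spec (f t) ≤ g t) :
    Summable f := by
  have h1 : Summable (fun t => Phic (f t)) := by
    apply Summable.of_norm
    apply Summable.of_nonneg_of_le (fun t => norm_nonneg _) (fun t => hle t) hg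
  exact (Phic.summable).mp h1

lemma spec_tsum_le {m l : ℕ} {f : ℕ → Matrix (Fin m) (Fin l) ℝ}
    {g : ℕ → ℝ} (hg : Summable g) (hle : ∀ t, spec (f t) ≤ g t) :
    spec (∑' t, f t) ≤ ∑' t, g t := by
  have hf : Summable f := summable_of_spec_summable hg hle
  have hmap : Phic (∑' t, f t) = ∑' t, Phic (f t) :=
    ContinuousLinearMap.map_tsum (Phic.toContinuousLinearMap) hf
  have hnorm : Summable (fun t => ‖Phic (f t)‖) :=
    Summable.of_nonneg_of_le (fun t => norm_nonneg _) (fun t => hle t) hg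
  calc spec (∑' t, f t) = ‖Phic (∑' t, f t)‖ := rfl
  _ = ‖∑' t, Phic (f t)‖ := by rw [hmap]
  _ ≤ ∑' t, ‖Phic (f t)‖ := norm_tsum_le_tsum_norm hnorm
  _ ≤ ∑' t, g t := Summable.tsum_le_tsum (fun t => hle t) hnorm hg

end SpecAux

namespace SpecAux

noncomputable def sandwichCLM {n : ℕ} (γ : ℝ) (L : Matrix (Fin n) (Fin n) ℝ) :
    Matrix (Fin n) (Fin n) ℝ →L[ℝ] Matrix (Fin n) (Fin n) ℝ :=
  LinearMap.toContinuousLinearMap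
  { toFun := fun X => γ • (Lᵀ * X * L)
    map_add' := by intro X Y; simp [Matrix.add_mul, Matrix.mul_add, smul_add]
    map_smul' := by
      intro c X
      simp [Matrix.mul_smul, Matrix.smul_mul, smul_smul, mul_comm] }

lemma sandwichCLM_apply {n : ℕ} (γ : ℝ) (L X : Matrix (Fin n) (Fin n) ℝ) :
    sandwichCLM γ L X = γ • (Lᵀ * X * L) := rfl

noncomputable def transposeCLM {m l : ℕ} :
    Matrix (Fin m) (Fin l) ℝ →L[ℝ] Matrix (Fin l) (Fin m) ℝ :=
  LinearMap.toContinuousLinearMap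
  { toFun := fun X => Xᵀ
    map_add' := by intro X Y; simp [Matrix.transpose_add]
    map_smul' := by intro c X; simp [Matrix.transpose_smul] }

noncomputable def qformCLM {n : ℕ} (x : Fin n → ℝ) :
    Matrix (Fin n) (Fin n) ℝ →L[ℝ] ℝ :=
  LinearMap.toContinuousLinearMap
  { toFun := fun X => x ⬝ᵥ (X *ᵥ x)
    map_add' := by intro X Y; simp [Matrix.add_mulVec, dotProduct_add]
    map_smul' := by intro c X; simp [Matrix.smul_mulVec, dotProduct_smul] }

lemma transpose_tsum {m l : ℕ} {f : ℕ → Matrix (Fin m) (Fin l) ℝ} (hf : Summable f) :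
    (∑' t, f t)ᵀ = ∑' t, (f t)ᵀ :=
  ContinuousLinearMap.map_tsum transposeCLM hf

lemma qform_tsum {n : ℕ} (x : Fin n → ℝ) {f : ℕ → Matrix (Fin n) (Fin n) ℝ} (hf : Summable f) :
    x ⬝ᵥ ((∑' t, f t) *ᵥ x) = ∑' t, x ⬝ᵥ (f t *ᵥ x) :=
  ContinuousLinearMap.map_tsum (qformCLM x) hf

section lyap

variable {n : ℕ} {γ ρ : ℝ} (hγ0 : 0 ≤ γ) (hρ0 : 0 ≤ ρ) (hγρ : γ * ρ ^ 2 < 1)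
  {L : Matrix (Fin n) (Fin n) ℝ} (C : Matrix (Fin n) (Fin n) ℝ) (hL : spec L ≤ ρ)

include hγ0 hρ0 hγρ hL
set_option linter.unusedSectionVars false

lemma lyap_term_le : ∀ t, spec (γ ^ t • ((Lᵀ) ^ t * C * L ^ t)) ≤ spec C * (γ * ρ ^ 2) ^ t := by
  intro t
  rw [spec_smul, abs_of_nonneg (pow_nonneg hγ0 t)]
  have h1 : spec ((Lᵀ) ^ t * C * L ^ t) ≤ ρ ^ t * spec C * ρ ^ t := by
    calc spec ((Lᵀ) ^ t * C * L ^ t) ≤ spec ((Lᵀ) ^ t * C) * spec (L ^ t) := spec_mul_le _ _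
    _ ≤ spec ((Lᵀ) ^ t) * spec C * spec (L ^ t) := by
        apply mul_le_mul_of_nonneg_right (spec_mul_le _ _) (spec_nonneg _)
    _ ≤ ρ ^ t * spec C * ρ ^ t := by
        have hT : spec (Lᵀ) ≤ ρ := by rw [spec_transpose]; exact hL
        have h2 := spec_pow_le (Lᵀ) t ρ hT hρ0
        have h3 := spec_pow_le L t ρ hL hρ0
        apply mul_le_mul (mul_le_mul h2 le_rfl (spec_nonneg _) (pow_nonneg hρ0 t)) h3
          (spec_nonneg _) (mul_nonneg (pow_nonneg hρ0 t) (spec_nonneg C))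
  calc γ ^ t * spec ((Lᵀ) ^ t * C * L ^ t) ≤ γ ^ t * (ρ ^ t * spec C * ρ ^ t) := by
        apply mul_le_mul_of_nonneg_left h1 (pow_nonneg hγ0 t)
  _ = spec C * (γ * ρ ^ 2) ^ t := by ring

lemma lyap_summable : Summable (fun t => γ ^ t • ((Lᵀ) ^ t * C * L ^ t)) := by
  apply summable_of_spec_summable _ (lyap_term_le hγ0 hρ0 hγρ C hL)
  exact (summable_geometric_of_lt_one (by positivity) hγρ).mul_left _

lemma lyap_spec_le :
    spec (∑' t, γ ^ t • ((Lᵀ) ^ t * C * L ^ t)) ≤ spec C * (1 - γ * ρ ^ 2)⁻¹ := by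
  have := spec_tsum_le ((summable_geometric_of_lt_one (by positivity) hγρ).mul_left (spec C))
    (lyap_term_le hγ0 hρ0 hγρ C hL)
  calc spec (∑' t, γ ^ t • ((Lᵀ) ^ t * C * L ^ t)) ≤ ∑' t, spec C * (γ * ρ ^ 2) ^ t := this
  _ = spec C * (1 - γ * ρ ^ 2)⁻¹ := by
      rw [tsum_mul_left, tsum_geometric_of_lt_one (by positivity) hγρ]

lemma lyap_rec :
    (∑' t, γ ^ t • ((Lᵀ) ^ t * C * L ^ t)) =
      C + γ • (Lᵀ * (∑' t, γ ^ t • ((Lᵀ) ^ t * C * L ^ t)) * L) := by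
  have hs : Summable (fun t => γ ^ t • ((Lᵀ) ^ t * C * L ^ t)) := lyap_summable hγ0 hρ0 hγρ C hL
  have h0 : γ ^ 0 • ((Lᵀ) ^ 0 * C * L ^ 0) = C := by simp
  have hsucc : ∀ t, γ ^ (t+1) • ((Lᵀ) ^ (t+1) * C * L ^ (t+1)) =
      sandwichCLM γ L (γ ^ t • ((Lᵀ) ^ t * C * L ^ t)) := by
    intro t
    rw [sandwichCLM_apply]
    rw [pow_succ L, pow_succ' (Lᵀ), pow_succ γ]
    rw [Matrix.mul_smul, Matrix.smul_mul, smul_smul, mul_comm γ (γ ^ t)]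
    congr 1
    noncomm_ring
  calc (∑' t, γ ^ t • ((Lᵀ) ^ t * C * L ^ t))
      = C + ∑' t, γ ^ (t+1) • ((Lᵀ) ^ (t+1) * C * L ^ (t+1)) := by
        rw [Summable.tsum_eq_zero_add hs, h0]
  _ = C + ∑' t, sandwichCLM γ L (γ ^ t • ((Lᵀ) ^ t * C * L ^ t)) := by
        congr 1; exact tsum_congr hsucc
  _ = C + γ • (Lᵀ * (∑' t, γ ^ t • ((Lᵀ) ^ t * C * L ^ t)) * L) := by
        rw [← ContinuousLinearMap.map_tsum (sandwichCLM γ L) hs, sandwichCLM_apply]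

end lyap

end SpecAux

namespace SpecAux

lemma psd_qform {n : ℕ} {M : Matrix (Fin n) (Fin n) ℝ} (hM : M.PosSemidef) (x : Fin n → ℝ) :
    0 ≤ x ⬝ᵥ (M *ᵥ x) := by simpa using hM.dotProduct_mulVec_nonneg x

lemma psd_of {n : ℕ} {M : Matrix (Fin n) (Fin n) ℝ} (hsym : Mᵀ = M)
    (h : ∀ x, 0 ≤ x ⬝ᵥ (M *ᵥ x)) : M.PosSemidef := by
  refine .of_dotProduct_mulVec_nonneg ?_ fun x => by simpa using h x
  rw [Matrix.IsHermitian, Matrix.conjTranspose_eq_transpose_of_trivial, hsym]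

lemma psd_smul {n : ℕ} {M : Matrix (Fin n) (Fin n) ℝ} (hM : M.PosSemidef) {c : ℝ}
    (hc : 0 ≤ c) : (c • M).PosSemidef := by
  apply psd_of
  · rw [Matrix.transpose_smul]
    rw [show Mᵀ = M from by
      rw [← Matrix.conjTranspose_eq_transpose_of_trivial]; exact hM.1]
  · intro x
    rw [Matrix.smul_mulVec, dotProduct_smul, smul_eq_mul]
    exact mul_nonneg hc (psd_qform hM x)

lemma psd_transpose_mul_mul {n m : ℕ} {M : Matrix (Fin n) (Fin n) ℝ} (hM : M.PosSemidef)
    (N : Matrix (Fin n) (Fin m) ℝ) : (Nᵀ * M * N).PosSemidef := by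
  have := hM.conjTranspose_mul_mul_same N
  rwa [Matrix.conjTranspose_eq_transpose_of_trivial] at this

end SpecAux

namespace SpecAux

section pmat

variable {n k : ℕ} {γ ρ : ℝ} (hγ0 : 0 ≤ γ) (hρ0 : 0 ≤ ρ) (hγρ : γ * ρ ^ 2 < 1)
  (A : Matrix (Fin n) (Fin n) ℝ) (B : Matrix (Fin n) (Fin k) ℝ)
  (Q : Matrix (Fin n) (Fin n) ℝ) (R : Matrix (Fin k) (Fin k) ℝ)
  (K : Matrix (Fin k) (Fin n) ℝ)

lemma Pmat_eq : Pmat γ A B Q R K =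
    ∑' t : ℕ, γ ^ t • (((A - B * K)ᵀ) ^ t * (Q + Kᵀ * R * K) * (A - B * K) ^ t) := rfl

variable (hQ : Q.PosSemidef) (hR : R.PosDef) (hK : spec (A - B * K) ≤ ρ)

include hγ0 hρ0 hγρ hK
set_option linter.unusedSectionVars false

lemma Pmat_summable : Summable
    (fun t : ℕ => γ ^ t • (((A - B * K)ᵀ) ^ t * (Q + Kᵀ * R * K) * (A - B * K) ^ t)) :=
  lyap_summable hγ0 hρ0 hγρ _ hK

lemma Pmat_rec : Pmat γ A B Q R K = (Q + Kᵀ * R * K) +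
    γ • ((A - B * K)ᵀ * Pmat γ A B Q R K * (A - B * K)) :=
  lyap_rec hγ0 hρ0 hγρ _ hK

lemma Pmat_spec_le : spec (Pmat γ A B Q R K) ≤
    spec (Q + Kᵀ * R * K) * (1 - γ * ρ ^ 2)⁻¹ :=
  lyap_spec_le hγ0 hρ0 hγρ _ hK

include hQ hR

lemma Pmat_posSemidef : (Pmat γ A B Q R K).PosSemidef := by
  have hsum := Pmat_summable hγ0 hρ0 hγρ A B Q R K hK
  have hCsym : (Q + Kᵀ * R * K)ᵀ = Q + Kᵀ * R * K := by
    have hQs : Qᵀ = Q := by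
      rw [← Matrix.conjTranspose_eq_transpose_of_trivial]; exact hQ.1
    have hRs : Rᵀ = R := by
      rw [← Matrix.conjTranspose_eq_transpose_of_trivial]; exact hR.1
    rw [Matrix.transpose_add, hQs, Matrix.transpose_mul, Matrix.transpose_mul,
      Matrix.transpose_transpose, hRs, Matrix.mul_assoc]
  have hCpsd : (Q + Kᵀ * R * K).PosSemidef := by
    have := psd_transpose_mul_mul hR.posSemidef K
    exact hQ.add this
  apply psd_of
  · rw [Pmat_eq, transpose_tsum hsum]
    apply tsum_congr
    intro t
    rw [Matrix.transpose_smul]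
    congr 1
    simp only [Matrix.transpose_mul, Matrix.transpose_pow, Matrix.transpose_transpose,
      hCsym, Matrix.mul_assoc]
    rw [show (Q + Kᵀ * (R * K))ᵀ = Q + Kᵀ * (R * K) from by
      rw [← Matrix.mul_assoc]; exact hCsym]
  · intro x
    rw [Pmat_eq, qform_tsum x hsum]
    apply tsum_nonneg
    intro t
    have : (γ ^ t • (((A - B * K)ᵀ) ^ t * (Q + Kᵀ * R * K) * (A - B * K) ^ t)).PosSemidef := by
      apply psd_smul _ (pow_nonneg hγ0 t)
      rw [← Matrix.transpose_pow]
      exact psd_transpose_mul_mul hCpsd _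
    exact psd_qform this x

end pmat

end SpecAux



namespace SpecAux

lemma sigMin_le_apply {m l : ℕ} (M : Matrix (Fin m) (Fin l) ℝ)
    (x : EuclideanSpace ℝ (Fin l)) (hx : ‖x‖ = 1) : sigMin M ≤ ‖Phi M x‖ := by
  apply csInf_le
  · exact ⟨0, fun r hr => by obtain ⟨y, _, rfl⟩ := hr; exact norm_nonneg _⟩
  · exact ⟨x, hx, rfl⟩

lemma sigMin_mul_norm_le {m l : ℕ} (M : Matrix (Fin m) (Fin l) ℝ)
    (y : EuclideanSpace ℝ (Fin l)) : sigMin M * ‖y‖ ≤ ‖Phi M y‖ := by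
  rcases eq_or_ne y 0 with rfl | hy
  · simp
  · have hny : ‖y‖ ≠ 0 := norm_ne_zero_iff.mpr hy
    have hx : ‖(‖y‖⁻¹ • y : EuclideanSpace ℝ (Fin l))‖ = 1 := by
      rw [norm_smul, norm_inv, norm_norm, inv_mul_cancel₀ hny]
    have h := sigMin_le_apply M _ hx
    rw [_root_.map_smul, norm_smul, norm_inv, norm_norm] at h
    have := mul_le_mul_of_nonneg_right h (norm_nonneg y)
    calc sigMin M * ‖y‖ ≤ ‖y‖⁻¹ * ‖Phi M y‖ * ‖y‖ := this
    _ = ‖Phi M y‖ := by field_simp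

lemma sigMin_mul_spec_le {m l p : ℕ} (B : Matrix (Fin m) (Fin l) ℝ)
    (K : Matrix (Fin l) (Fin p) ℝ) (hB : 0 < sigMin B) :
    sigMin B * spec K ≤ spec (B * K) := by
  rw [mul_comm, ← le_div_iff₀ hB, spec_eq]
  apply ContinuousLinearMap.opNorm_le_bound _ (div_nonneg (spec_nonneg _) hB.le)
  intro x
  rw [div_mul_eq_mul_div, le_div_iff₀ hB, mul_comm _ (sigMin B)]
  calc sigMin B * ‖Phi K x‖ ≤ ‖Phi B (Phi K x)‖ := sigMin_mul_norm_le B _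
  _ = ‖Phi (B * K) x‖ := by rw [Phi_mul]; rfl
  _ ≤ spec (B * K) * ‖x‖ := by
      rw [spec_eq]; exact ContinuousLinearMap.le_opNorm _ x

lemma spec_K_le {n k : ℕ} {ρ : ℝ} (A : Matrix (Fin n) (Fin n) ℝ)
    (B : Matrix (Fin n) (Fin k) ℝ) (K : Matrix (Fin k) (Fin n) ℝ)
    (hB : 0 < sigMin B) (hK : spec (A - B * K) ≤ ρ) :
    spec K ≤ (ρ + spec A) / sigMin B := by
  rw [le_div_iff₀ hB, mul_comm]
  calc sigMin B * spec K ≤ spec (B * K) := sigMin_mul_spec_le B K hB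
  _ = spec (A - (A - B * K)) := by congr 1; abel
  _ ≤ spec A + spec (A - B * K) := spec_sub_le _ _
  _ ≤ spec A + ρ := by linarith
  _ = ρ + spec A := by ring

end SpecAux


namespace SpecAux

lemma key_id {n k : ℕ} (γ : ℝ) (A : Matrix (Fin n) (Fin n) ℝ) (B : Matrix (Fin n) (Fin k) ℝ)
    (R : Matrix (Fin k) (Fin k) ℝ) (K Ks : Matrix (Fin k) (Fin n) ℝ)
    (Ps : Matrix (Fin n) (Fin n) ℝ) :
    Kᵀ * R * K - Ksᵀ * R * Ks + γ • ((A - B * K)ᵀ * Ps * (A - B * K)) -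
      γ • ((A - B * Ks)ᵀ * Ps * (A - B * Ks)) =
    (K - Ks)ᵀ * (R * K - γ • (Bᵀ * Ps * (A - B * K))) +
      (Ksᵀ * R - γ • ((A - B * Ks)ᵀ * Ps * B)) * (K - Ks) := by
  simp only [Matrix.transpose_sub, Matrix.transpose_mul, Matrix.sub_mul, Matrix.mul_sub,
    Matrix.add_mul, Matrix.mul_add, smul_sub, smul_add, Matrix.smul_mul, Matrix.mul_smul,
    Matrix.mul_assoc]
  module

lemma D_rec {n k : ℕ} (γ : ℝ) (A : Matrix (Fin n) (Fin n) ℝ) (B : Matrix (Fin n) (Fin k) ℝ)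
    (Q : Matrix (Fin n) (Fin n) ℝ) (R : Matrix (Fin k) (Fin k) ℝ)
    (K Ks : Matrix (Fin k) (Fin n) ℝ) (P Ps : Matrix (Fin n) (Fin n) ℝ)
    (h1 : P = (Q + Kᵀ * R * K) + γ • ((A - B * K)ᵀ * P * (A - B * K)))
    (h2 : Ps = (Q + Ksᵀ * R * Ks) + γ • ((A - B * Ks)ᵀ * Ps * (A - B * Ks)))
    (h3t : Ksᵀ * R = γ • ((A - B * Ks)ᵀ * Ps * B)) :
    P - Ps = (K - Ks)ᵀ * (R * K - γ • (Bᵀ * Ps * (A - B * K))) +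
      γ • ((A - B * K)ᵀ * (P - Ps) * (A - B * K)) := by
  have e : P - Ps - γ • ((A - B * K)ᵀ * (P - Ps) * (A - B * K)) =
      Kᵀ * R * K - Ksᵀ * R * Ks + γ • ((A - B * K)ᵀ * Ps * (A - B * K)) -
        γ • ((A - B * Ks)ᵀ * Ps * (A - B * Ks)) := by
    nth_rewrite 1 [h1]
    nth_rewrite 1 [h2]
    simp only [Matrix.mul_sub, Matrix.sub_mul, smul_sub]
    abel
  rw [key_id] at e
  have z : Ksᵀ * R - γ • ((A - B * Ks)ᵀ * Ps * B) = 0 := sub_eq_zero.mpr h3t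
  rw [z, Matrix.zero_mul, add_zero] at e
  linear_combination (norm := abel) e

end SpecAux


namespace SpecAux

lemma spec_sum_le {m l : ℕ} (F : Finset ℕ) (f : ℕ → Matrix (Fin m) (Fin l) ℝ) :
    spec (∑ s ∈ F, f s) ≤ ∑ s ∈ F, spec (f s) := by
  rw [spec_eq, map_sum]
  exact norm_sum_le _ _

lemma psd_mul_mul_transpose {n m : ℕ} {M : Matrix (Fin n) (Fin n) ℝ} (hM : M.PosSemidef)
    (N : Matrix (Fin m) (Fin n) ℝ) : (N * M * Nᵀ).PosSemidef := by
  have := hM.mul_mul_conjTranspose_same N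
  rwa [Matrix.conjTranspose_eq_transpose_of_trivial] at this

lemma psd_sum {n : ℕ} (F : Finset ℕ) (f : ℕ → Matrix (Fin n) (Fin n) ℝ)
    (h : ∀ s ∈ F, (f s).PosSemidef) : (∑ s ∈ F, f s).PosSemidef := by
  exact Finset.sum_induction f _ (fun a b ha hb => ha.add hb) Matrix.PosSemidef.zero h

section smat

variable {n k : ℕ} (hn : 0 < n) {γ ρ : ℝ} (hγ0 : 0 ≤ γ) (hγ1 : γ < 1) (hρ0 : 0 ≤ ρ)
  (hγρ : γ * ρ ^ 2 < 1)
  (A : Matrix (Fin n) (Fin n) ℝ) (B : Matrix (Fin n) (Fin k) ℝ)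
  (W : Matrix (Fin n) (Fin n) ℝ) (D₀ : Matrix (Fin n) (Fin n) ℝ)
  (Ks : Matrix (Fin k) (Fin n) ℝ) (Sg : Matrix (Fin k) (Fin k) ℝ)
  (hW : W.PosSemidef) (hD₀ : D₀.PosSemidef) (hSg : Sg.PosSemidef)
  (hKs : spec (A - B * Ks) ≤ ρ)

set_option linter.unusedSectionVars false
set_option maxHeartbeats 1000000

include hn hγ0 hγ1 hρ0 hγρ hW hD₀ hSg hKs in
lemma smat_spec_ge : sigMin D₀ ≤ spec (Smat γ A B W D₀ Ks Sg) := by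
  set L := A - B * Ks with hL
  set V := B * Sg * Bᵀ + W with hV
  set f : ℕ → Matrix (Fin n) (Fin n) ℝ := fun t => γ ^ t •
    (L ^ t * D₀ * (Lᵀ) ^ t + ∑ s ∈ Finset.Icc 1 t, L ^ (t - s) * V * (Lᵀ) ^ (t - s)) with hf
  have hSmat : Smat γ A B W D₀ Ks Sg = ∑' t, f t := rfl
  set m : ℝ := max 1 (ρ ^ 2) with hm
  have hm1 : 1 ≤ m := le_max_left _ _
  have hρm : ρ ^ 2 ≤ m := le_max_right _ _
  have hr1 : γ * m < 1 := by
    rcases max_cases 1 (ρ ^ 2) with ⟨h1, h2⟩ | ⟨h1, h2⟩ <;> rw [hm, h1]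
    · linarith
    · exact hγρ
  have hr0 : 0 ≤ γ * m := mul_nonneg hγ0 (by linarith)
  -- spec bound on terms
  have hLT : spec (Lᵀ) ≤ ρ := by rw [spec_transpose]; exact hKs
  have hterm : ∀ t, spec (f t) ≤ (spec D₀ + spec V * t) * (γ * m) ^ t := by
    intro t
    rw [hf]
    simp only []
    rw [spec_smul, abs_of_nonneg (pow_nonneg hγ0 t)]
    have hD0t : spec (L ^ t * D₀ * (Lᵀ) ^ t) ≤ spec D₀ * m ^ t := by
      calc spec (L ^ t * D₀ * (Lᵀ) ^ t) ≤ spec (L ^ t * D₀) * spec ((Lᵀ) ^ t) :=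
            spec_mul_le _ _
      _ ≤ spec (L ^ t) * spec D₀ * spec ((Lᵀ) ^ t) :=
            mul_le_mul_of_nonneg_right (spec_mul_le _ _) (spec_nonneg _)
      _ ≤ ρ ^ t * spec D₀ * ρ ^ t := by
            apply mul_le_mul (mul_le_mul (spec_pow_le _ _ _ hKs hρ0) le_rfl
              (spec_nonneg _) (pow_nonneg hρ0 t)) (spec_pow_le _ _ _ hLT hρ0)
              (spec_nonneg _) (mul_nonneg (pow_nonneg hρ0 t) (spec_nonneg _))
      _ = spec D₀ * (ρ ^ 2) ^ t := by rw [← pow_mul]; ring_nf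
      _ ≤ spec D₀ * m ^ t := by
            apply mul_le_mul_of_nonneg_left (pow_le_pow_left₀ (by positivity) hρm t)
              (spec_nonneg _)
    have hVt : ∀ s ∈ Finset.Icc 1 t, spec (L ^ (t - s) * V * (Lᵀ) ^ (t - s)) ≤
        spec V * m ^ t := by
      intro s _
      set j := t - s with hj
      calc spec (L ^ j * V * (Lᵀ) ^ j) ≤ spec (L ^ j * V) * spec ((Lᵀ) ^ j) := spec_mul_le _ _
      _ ≤ spec (L ^ j) * spec V * spec ((Lᵀ) ^ j) :=
            mul_le_mul_of_nonneg_right (spec_mul_le _ _) (spec_nonneg _)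
      _ ≤ ρ ^ j * spec V * ρ ^ j := by
            apply mul_le_mul (mul_le_mul (spec_pow_le _ _ _ hKs hρ0) le_rfl
              (spec_nonneg _) (pow_nonneg hρ0 j)) (spec_pow_le _ _ _ hLT hρ0)
              (spec_nonneg _) (mul_nonneg (pow_nonneg hρ0 j) (spec_nonneg _))
      _ = spec V * (ρ ^ 2) ^ j := by rw [← pow_mul]; ring_nf
      _ ≤ spec V * m ^ t := by
            apply mul_le_mul_of_nonneg_left _ (spec_nonneg _)
            calc (ρ ^ 2) ^ j ≤ m ^ j := pow_le_pow_left₀ (by positivity) hρm j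
            _ ≤ m ^ t := pow_le_pow_right₀ hm1 (by omega)
    calc γ ^ t * spec (L ^ t * D₀ * (Lᵀ) ^ t + ∑ s ∈ Finset.Icc 1 t, L ^ (t-s) * V * (Lᵀ) ^ (t-s))
        ≤ γ ^ t * (spec (L ^ t * D₀ * (Lᵀ) ^ t) +
            ∑ s ∈ Finset.Icc 1 t, spec (L ^ (t-s) * V * (Lᵀ) ^ (t-s))) := by
          apply mul_le_mul_of_nonneg_left _ (pow_nonneg hγ0 t)
          exact le_trans (spec_add_le _ _) (by gcongr; exact spec_sum_le _ _)
    _ ≤ γ ^ t * (spec D₀ * m ^ t + ∑ s ∈ Finset.Icc 1 t, spec V * m ^ t) := by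
          apply mul_le_mul_of_nonneg_left _ (pow_nonneg hγ0 t)
          exact add_le_add hD0t (Finset.sum_le_sum hVt)
    _ = γ ^ t * (spec D₀ * m ^ t + spec V * m ^ t * t) := by
          rw [Finset.sum_const, Nat.card_Icc, Nat.add_sub_cancel, nsmul_eq_mul]
          ring
    _ = (spec D₀ + spec V * t) * (γ * m) ^ t := by rw [mul_pow]; ring
  have hgsum : Summable (fun t : ℕ => (spec D₀ + spec V * t) * (γ * m) ^ t) := by
    have h1 : Summable (fun t : ℕ => spec D₀ * (γ * m) ^ t) :=
      (summable_geometric_of_lt_one hr0 hr1).mul_left _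
    have h2 : Summable (fun t : ℕ => spec V * ((t : ℝ) ^ 1 * (γ * m) ^ t)) :=
      (summable_pow_mul_geometric_of_norm_lt_one (R := ℝ) 1
        (by rwa [Real.norm_eq_abs, abs_of_nonneg hr0])).mul_left _
    apply (h1.add h2).congr
    intro t
    simp [pow_one]
    ring
  have hfsum : Summable f := summable_of_spec_summable hgsum hterm
  -- each term is PSD
  have hpsd : ∀ t, (f t).PosSemidef := by
    intro t
    apply psd_smul _ (pow_nonneg hγ0 t)
    rw [← Matrix.transpose_pow]
    apply Matrix.PosSemidef.add (psd_mul_mul_transpose hD₀ _)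
    have hVpsd : V.PosSemidef := by
      rw [hV]
      have : (B * Sg * Bᵀ).PosSemidef := psd_mul_mul_transpose hSg B
      exact this.add hW
    apply psd_sum
    intro s _
    rw [show (Lᵀ) ^ (t - s) = (L ^ (t - s))ᵀ from (Matrix.transpose_pow L (t-s)).symm]
    exact psd_mul_mul_transpose hVpsd _
  -- eigenvector of D₀
  obtain ⟨i⟩ : Nonempty (Fin n) := ⟨⟨0, hn⟩⟩
  set v := hD₀.1.eigenvectorBasis i with hv
  set lam := hD₀.1.eigenvalues i with hlam
  have hlam0 : 0 ≤ lam := hD₀.eigenvalues_nonneg i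
  have hvnorm : ‖v‖ = 1 := hD₀.1.eigenvectorBasis.orthonormal.1 i
  set x : Fin n → ℝ := (WithLp.equiv 2 (Fin n → ℝ)) v with hx
  have hmv : D₀ *ᵥ x = lam • x := hD₀.1.mulVec_eigenvectorBasis i
  -- sigMin D₀ ≤ lam
  have h1 : sigMin D₀ ≤ lam := by
    have h := sigMin_le_apply D₀ v hvnorm
    have hPhiv : Phi D₀ v = lam • v := by
      apply (WithLp.equiv 2 (Fin n → ℝ)).injective
      rw [show (WithLp.equiv 2 (Fin n → ℝ)) (Phi D₀ v) = D₀ *ᵥ x from rfl, hmv]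
      simp
      rfl
    rw [hPhiv, norm_smul, hvnorm, Real.norm_eq_abs, abs_of_nonneg hlam0, mul_one] at h
    exact h
  -- x ⬝ᵥ x = 1
  have hxx : x ⬝ᵥ x = 1 := by
    have : (x ⬝ᵥ x) = @inner ℝ _ _ v v := by
      rw [PiLp.inner_apply]
      simp [dotProduct, RCLike.inner_apply, hx, sq]
    rw [this, real_inner_self_eq_norm_sq, hvnorm, one_pow]
  -- lam ≤ qform of Smat
  have h2 : lam ≤ x ⬝ᵥ (Smat γ A B W D₀ Ks Sg *ᵥ x) := by
    rw [hSmat, qform_tsum x hfsum]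
    have hf0 : x ⬝ᵥ (f 0 *ᵥ x) = lam := by
      have : f 0 = D₀ := by
        rw [hf]
        simp [Finset.Icc_eq_empty_of_lt]
      rw [this, hmv, dotProduct_smul, smul_eq_mul, hxx, mul_one]
    have hsumq : Summable (fun t => x ⬝ᵥ (f t *ᵥ x)) :=
      (qformCLM x).summable hfsum
    calc lam = x ⬝ᵥ (f 0 *ᵥ x) := hf0.symm
    _ ≤ ∑' t, x ⬝ᵥ (f t *ᵥ x) := by
        apply Summable.le_tsum hsumq 0
        intro j _
        exact psd_qform (hpsd j) x
  -- qform ≤ spec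
  have h3 : x ⬝ᵥ (Smat γ A B W D₀ Ks Sg *ᵥ x) ≤ spec (Smat γ A B W D₀ Ks Sg) := by
    set S := Smat γ A B W D₀ Ks Sg with hS
    have hinner : x ⬝ᵥ (S *ᵥ x) = @inner ℝ _ _ v (Phi S v) := by
      rw [PiLp.inner_apply]
      simp only [RCLike.inner_apply, starRingEnd_apply, star_trivial]
      rw [dotProduct]; exact Finset.sum_congr rfl fun i _ => mul_comm _ _
    rw [hinner]
    calc @inner ℝ _ _ v (Phi S v) ≤ ‖v‖ * ‖Phi S v‖ := real_inner_le_norm _ _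
    _ ≤ ‖v‖ * (spec S * ‖v‖) := by
        apply mul_le_mul_of_nonneg_left _ (norm_nonneg _)
        rw [spec_eq]; exact ContinuousLinearMap.le_opNorm _ _
    _ = spec S := by rw [hvnorm]; ring
  linarith

end smat

end SpecAux


namespace SpecAux

lemma sigMin_le_spec {m l : ℕ} (hl : 0 < l) (M : Matrix (Fin m) (Fin l) ℝ) :
    sigMin M ≤ spec M := by
  set x : EuclideanSpace ℝ (Fin l) := EuclideanSpace.single ⟨0, hl⟩ 1 with hxdef
  have hx : ‖x‖ = 1 := by rw [hxdef, EuclideanSpace.norm_single, norm_one]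
  calc sigMin M ≤ ‖Phi M x‖ := sigMin_le_apply M x hx
  _ ≤ spec M * ‖x‖ := by rw [spec_eq]; exact ContinuousLinearMap.le_opNorm _ _
  _ = spec M := by rw [hx, mul_one]

end SpecAux

open SpecAux

set_option maxHeartbeats 2000000 in
/-- Perturbation bound for the Riccati solution `P_K`. -/
theorem stmt19 (n k : ℕ) (hn : 0 < n) (hk : 0 < k)
    (γ τ : ℝ) (hγ0 : 0 < γ) (hγ1 : γ < 1) (hτ : 0 < τ)
    (A : Matrix (Fin n) (Fin n) ℝ) (B : Matrix (Fin n) (Fin k) ℝ)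
    (Q : Matrix (Fin n) (Fin n) ℝ) (hQ : Q.PosSemidef)
    (R : Matrix (Fin k) (Fin k) ℝ) (hR : R.PosDef)
    (W : Matrix (Fin n) (Fin n) ℝ) (hW : W.PosSemidef)
    (D₀ : Matrix (Fin n) (Fin n) ℝ) (hD₀ : D₀.PosSemidef) (hμ : 0 < sigMin D₀)
    (ρ : ℝ) (hρ0 : 0 < ρ) (hρ : ρ < 1 / Real.sqrt γ) (hB : 0 < sigMin B)
    (Kstar : Matrix (Fin k) (Fin n) ℝ)
    (hKstarρ : spec (A - B * Kstar) ≤ ρ)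
    (hfix : Kstar =
      γ • ((R + γ • (Bᵀ * Pmat γ A B Q R Kstar * B))⁻¹ * (Bᵀ * Pmat γ A B Q R Kstar * A)))
    (Sgstar : Matrix (Fin k) (Fin k) ℝ)
    (hSgstar : Sgstar = (τ / 2) • (R + γ • (Bᵀ * Pmat γ A B Q R Kstar * B))⁻¹)
    (Sstar : Matrix (Fin n) (Fin n) ℝ)
    (hSstar : Sstar = Smat γ A B W D₀ Kstar Sgstar)
    (κ ξ c : ℝ)
    (hκ : κ = (ρ + spec A) / sigMin B)
    (hξ : ξ = (1 - γ * ρ ^ 2 + γ) / (1 - γ * ρ ^ 2) ^ 2)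
    (hc : c = 2 * ρ * ξ * spec B * (spec Q + spec R * κ ^ 2) +
      (1 / sigMin D₀) * spec Sstar * spec R * (κ + spec Kstar))
    (K : Matrix (Fin k) (Fin n) ℝ) (hKρ : spec (A - B * K) ≤ ρ) :
    spec (Pmat γ A B Q R K - Pmat γ A B Q R Kstar) ≤ c * spec (K - Kstar) := by
  classical
  -- basic scalars
  have hsγ : (0:ℝ) < Real.sqrt γ := Real.sqrt_pos.mpr hγ0
  have hργ : ρ * Real.sqrt γ < 1 := by
    rw [mul_comm]
    calc Real.sqrt γ * ρ < Real.sqrt γ * (1 / Real.sqrt γ) := by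
          exact mul_lt_mul_of_pos_left hρ hsγ
    _ = 1 := by field_simp
  have hγρ : γ * ρ ^ 2 < 1 := by
    have h1 : γ * ρ ^ 2 = (ρ * Real.sqrt γ) ^ 2 := by
      rw [mul_pow, Real.sq_sqrt hγ0.le]; ring
    rw [h1]
    exact pow_lt_one₀ (by positivity) hργ (by norm_num)
  set u : ℝ := 1 - γ * ρ ^ 2 with hu
  have hu0 : 0 < u := by rw [hu]; linarith only [hγρ]
  set s : ℝ := u⁻¹ with hsdef
  have hs0 : 0 < s := inv_pos.mpr hu0
  have hus : u * s = 1 := mul_inv_cancel₀ (ne_of_gt hu0)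
  -- matrices
  set Ps := Pmat γ A B Q R Kstar with hPsdef
  set P := Pmat γ A B Q R K with hPdef
  set L := A - B * K with hLdef
  set Ls := A - B * Kstar with hLsdef
  set Δ := K - Kstar with hΔdef
  -- norm abbreviations
  set q := spec Q with hq
  set r := spec R with hr
  set b := spec B with hb
  set ks := spec Kstar with hks
  set δ := spec Δ with hδ
  set d := spec (P - Ps) with hd
  set μ := sigMin D₀ with hμ2
  have hq0 : 0 ≤ q := spec_nonneg Q
  have hr0 : 0 ≤ r := spec_nonneg R
  have hb0 : 0 ≤ b := spec_nonneg B
  have hks0 : 0 ≤ ks := spec_nonneg Kstar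
  have hδ0 : 0 ≤ δ := spec_nonneg Δ
  have hd0 : 0 ≤ d := spec_nonneg _
  -- K bounds
  have hKκ : spec K ≤ κ := by rw [hκ]; exact spec_K_le A B K hB hKρ
  have hKsκ : ks ≤ κ := by rw [hks, hκ]; exact spec_K_le A B Kstar hB hKstarρ
  have hκ0 : 0 ≤ κ := le_trans hks0 hKsκ
  have hbκ : ρ ≤ b * κ := by
    have h1 : sigMin B ≤ b := sigMin_le_spec hk B
    have h2 : κ * sigMin B = ρ + spec A := by
      rw [hκ]; field_simp
    have h3 : sigMin B * κ ≤ b * κ := mul_le_mul_of_nonneg_right h1 hκ0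
    have h4 : κ * sigMin B = sigMin B * κ := mul_comm _ _
    linarith only [h2, h3, h4, spec_nonneg A]
  -- recursions
  have hrecK : P = (Q + Kᵀ * R * K) + γ • (Lᵀ * P * L) :=
    Pmat_rec hγ0.le (le_trans (spec_nonneg _) hKρ) hγρ A B Q R K hKρ
  have hrecKs : Ps = (Q + Kstarᵀ * R * Kstar) + γ • (Lsᵀ * Ps * Ls) :=
    Pmat_rec hγ0.le (le_trans (spec_nonneg _) hKρ) hγρ A B Q R Kstar hKstarρ
  have hρ0' : 0 ≤ ρ := le_trans (spec_nonneg _) hKρ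
  -- Ps facts
  have hPspsd : Ps.PosSemidef :=
    Pmat_posSemidef hγ0.le hρ0' hγρ A B Q R Kstar hQ hR hKstarρ
  have hPssym : Psᵀ = Ps := by
    rw [← Matrix.conjTranspose_eq_transpose_of_trivial]; exact hPspsd.1
  have hRsym : Rᵀ = R := by
    rw [← Matrix.conjTranspose_eq_transpose_of_trivial]; exact hR.1
  -- fixed point identity
  set G := R + γ • (Bᵀ * Ps * B) with hG
  have hGpd : G.PosDef := by
    rw [hG]
    exact hR.add_posSemidef (psd_smul (psd_transpose_mul_mul hPspsd B) hγ0.le)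
  have hGdet : IsUnit G.det := isUnit_iff_ne_zero.mpr (ne_of_gt hGpd.det_pos)
  have e3 : R * Kstar = γ • (Bᵀ * Ps * Ls) := by
    have h4 : G * Kstar = γ • (Bᵀ * Ps * A) := by
      rw [hfix, Matrix.mul_smul, Matrix.mul_nonsing_inv_cancel_left _ _ hGdet]
    rw [hG, Matrix.add_mul, Matrix.smul_mul] at h4
    have h5 : R * Kstar = γ • (Bᵀ * Ps * A) - γ • (Bᵀ * Ps * B * Kstar) := by
      rw [← h4]; abel
    rw [h5, hLsdef, ← smul_sub]
    congr 1
    rw [Matrix.mul_sub]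
    congr 1
    rw [Matrix.mul_assoc]
  have e3t : Kstarᵀ * R = γ • (Lsᵀ * Ps * B) := by
    have := congrArg Matrix.transpose e3
    rw [Matrix.transpose_mul, hRsym, Matrix.transpose_smul, Matrix.transpose_mul,
      Matrix.transpose_mul, Matrix.transpose_transpose, hPssym] at this
    rw [this, Matrix.mul_assoc]
  -- the recursion for the difference
  have hDrec : P - Ps = Δ ᵀ * (R * K - γ • (Bᵀ * Ps * L)) + γ • (Lᵀ * (P - Ps) * L) :=
    D_rec γ A B Q R K Kstar P Ps hrecK hrecKs e3t
  -- spectral bounds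
  set vv := spec (R * K - γ • (Bᵀ * Ps * L)) with hvv
  have hvv0 : 0 ≤ vv := spec_nonneg _
  have hdvv : d ≤ δ * vv + γ * ρ ^ 2 * d := by
    calc d = spec (Δᵀ * (R * K - γ • (Bᵀ * Ps * L)) + γ • (Lᵀ * (P - Ps) * L)) :=
          congrArg spec hDrec
    _ ≤ spec (Δᵀ * (R * K - γ • (Bᵀ * Ps * L))) + spec (γ • (Lᵀ * (P - Ps) * L)) :=
          spec_add_le _ _
    _ ≤ δ * vv + γ * ρ ^ 2 * d := by
        apply add_le_add
        · calc spec (Δᵀ * (R * K - γ • (Bᵀ * Ps * L))) ≤ spec (Δᵀ) * vv := spec_mul_le _ _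
          _ = δ * vv := by rw [spec_transpose]
        · rw [spec_smul, abs_of_nonneg hγ0.le]
          have hLρ : spec L ≤ ρ := hKρ
          have hLTρ : spec (Lᵀ) ≤ ρ := by rw [spec_transpose]; exact hKρ
          calc γ * spec (Lᵀ * (P - Ps) * L) ≤ γ * (spec (Lᵀ * (P - Ps)) * spec L) :=
                mul_le_mul_of_nonneg_left (spec_mul_le _ _) hγ0.le
          _ ≤ γ * ((spec (Lᵀ) * spec (P - Ps)) * spec L) := by
                apply mul_le_mul_of_nonneg_left _ hγ0.le
                exact mul_le_mul_of_nonneg_right (spec_mul_le _ _) (spec_nonneg _)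
          _ ≤ γ * ((ρ * d) * ρ) := by
                apply mul_le_mul_of_nonneg_left _ hγ0.le
                apply mul_le_mul (mul_le_mul hLTρ le_rfl hd0 hρ0') hLρ (spec_nonneg _)
                  (mul_nonneg hρ0' hd0)
          _ = γ * ρ ^ 2 * d := by ring
  -- bound on Ps
  set e : ℝ := q + r * κ ^ 2 with he
  have he0 : 0 ≤ e := by positivity
  have hPsle : spec Ps ≤ e * s := by
    have h1 : spec Ps ≤ spec (Q + Kstarᵀ * R * Kstar) * s :=
      Pmat_spec_le hγ0.le hρ0' hγρ A B Q R Kstar hKstarρ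
    have h2 : spec (Q + Kstarᵀ * R * Kstar) ≤ e := by
      calc spec (Q + Kstarᵀ * R * Kstar) ≤ q + spec (Kstarᵀ * R * Kstar) := spec_add_le _ _
      _ ≤ q + spec (Kstarᵀ * R) * ks := by
          have h25 := spec_mul_le (Kstarᵀ * R) Kstar
          linarith only [h25]
      _ ≤ q + (ks * r) * ks := by
          have h3 : spec (Kstarᵀ * R) ≤ ks * r := by
            have := spec_mul_le (Kstarᵀ) R
            rw [spec_transpose] at this
            exact this
          have h26 := mul_le_mul_of_nonneg_right h3 hks0
          linarith only [h26]
      _ ≤ e := by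
          rw [he]
          have h5 : ks * ks ≤ κ * κ := mul_le_mul hKsκ hKsκ hks0 hκ0
          have h6 : r * (ks * ks) ≤ r * (κ * κ) := mul_le_mul_of_nonneg_left h5 hr0
          linarith only [h6]
    calc spec Ps ≤ spec (Q + Kstarᵀ * R * Kstar) * s := h1
    _ ≤ e * s := mul_le_mul_of_nonneg_right h2 hs0.le
  -- bound on vv
  have hvvle : vv ≤ r * κ + γ * b * ρ * (e * s) := by
    rw [hvv]
    calc spec (R * K - γ • (Bᵀ * Ps * L)) ≤ spec (R * K) + spec (γ • (Bᵀ * Ps * L)) :=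
          spec_sub_le _ _
    _ ≤ r * κ + γ * b * ρ * (e * s) := by
        apply add_le_add
        · calc spec (R * K) ≤ r * spec K := spec_mul_le _ _
          _ ≤ r * κ := mul_le_mul_of_nonneg_left hKκ hr0
        · rw [spec_smul, abs_of_nonneg hγ0.le]
          have h6 : spec (Bᵀ * Ps * L) ≤ b * (e * s) * ρ := by
            calc spec (Bᵀ * Ps * L) ≤ spec (Bᵀ * Ps) * spec L := spec_mul_le _ _
            _ ≤ (spec (Bᵀ) * spec Ps) * spec L :=
                mul_le_mul_of_nonneg_right (spec_mul_le _ _) (spec_nonneg _)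
            _ ≤ (b * (e * s)) * ρ := by
                rw [spec_transpose]
                apply mul_le_mul (mul_le_mul le_rfl hPsle (spec_nonneg _) hb0) hKρ
                  (spec_nonneg _) (by positivity)
          calc γ * spec (Bᵀ * Ps * L) ≤ γ * (b * (e * s) * ρ) :=
                mul_le_mul_of_nonneg_left h6 hγ0.le
          _ = γ * b * ρ * (e * s) := by ring
  -- Sstar bound
  have hSgpsd : Sgstar.PosSemidef := by
    rw [hSgstar]
    exact psd_smul hGpd.inv.posSemidef (by positivity)
  have hSge : μ ≤ spec Sstar := by
    rw [hSstar, hμ2]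
    exact smat_spec_ge hn hγ0.le hγ1 hρ0' hγρ A B W D₀ Kstar Sgstar hW hD₀ hSgpsd hKstarρ
  have hμ0 : 0 < μ := hμ
  have hMrt : 1 ≤ μ⁻¹ * spec Sstar := by
    rw [show (1:ℝ) = μ⁻¹ * μ from (inv_mul_cancel₀ (ne_of_gt hμ0)).symm]
    exact mul_le_mul_of_nonneg_left hSge (inv_nonneg.mpr hμ0.le)
  -- final arithmetic
  have hcval : c = 2 * ρ * ((u + γ) * s ^ 2) * b * e + (μ⁻¹ * spec Sstar) * r * (κ + ks) := by
    rw [hc, hξ, hsdef, one_div]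
    have hune : u ≠ 0 := ne_of_gt hu0
    field_simp
  have hs1 : s = 1 + γ * ρ ^ 2 * s := by
    field_simp [hsdef, hu]
    linear_combination hus - s * hu
  have hs2 : u * s ^ 2 = s := by
    calc u * s ^ 2 = (u * s) * s := by ring
    _ = s := by rw [hus, one_mul]
  have hrk2e : r * κ ^ 2 ≤ e := by rw [he]; linarith only [hq0]
  have hkey : vv * s ≤ 2 * ρ * ((u + γ) * s ^ 2) * b * e + r * κ := by
    have t1 : vv * s ≤ (r * κ + γ * b * ρ * (e * s)) * s :=
      mul_le_mul_of_nonneg_right hvvle hs0.le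
    have t3 : (r * κ + γ * b * ρ * (e * s)) * s =
        r * κ + γ * ρ ^ 2 * (r * κ) * s + γ * b * ρ * e * s ^ 2 := by
      linear_combination (r * κ) * hs1
    have t2 : γ * ρ ^ 2 * (r * κ) ≤ ρ * b * e := by
      have ta : γ * (ρ ^ 2 * (r * κ)) ≤ 1 * (ρ ^ 2 * (r * κ)) :=
        mul_le_mul_of_nonneg_right hγ1.le
          (mul_nonneg (by positivity) (mul_nonneg hr0 hκ0))
      have tb : ρ * (ρ * (r * κ)) ≤ (b * κ) * (ρ * (r * κ)) :=
        mul_le_mul_of_nonneg_right hbκ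
          (mul_nonneg hρ0' (mul_nonneg hr0 hκ0))
      have td : (ρ * b) * (r * κ ^ 2) ≤ (ρ * b) * e :=
        mul_le_mul_of_nonneg_left hrk2e (mul_nonneg hρ0' hb0)
      linarith only [ta, tb, td]
    have t4 : γ * ρ ^ 2 * (r * κ) * s ≤ ρ * b * e * s :=
      mul_le_mul_of_nonneg_right t2 hs0.le
    have t5 : γ * b * ρ * e * s ^ 2 ≤ 2 * γ * b * ρ * e * s ^ 2 := by
      have h27 : 0 ≤ γ * b * ρ * e * s ^ 2 := by positivity
      linarith only [h27]
    have t6 : ρ * b * e * s ≤ 2 * ρ * b * e * (u * s ^ 2) := by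
      rw [hs2]
      have h28 : 0 ≤ ρ * b * e * s := by positivity
      linarith only [h28]
    calc vv * s ≤ r * κ + γ * ρ ^ 2 * (r * κ) * s + γ * b * ρ * e * s ^ 2 := by
          rw [← t3]; exact t1
    _ ≤ r * κ + 2 * ρ * b * e * (u * s ^ 2) + 2 * γ * b * ρ * e * s ^ 2 := by linarith only [t4, t5, t6]
    _ = 2 * ρ * ((u + γ) * s ^ 2) * b * e + r * κ := by ring
  have hdle : d ≤ δ * (vv * s) := by
    have h7 : d * u ≤ δ * vv := by
      rw [hu]; linarith only [hdvv]

    calc d = d * (u * s) := by rw [hus, mul_one]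
    _ = (d * u) * s := by ring
    _ ≤ (δ * vv) * s := mul_le_mul_of_nonneg_right h7 hs0.le
    _ = δ * (vv * s) := by ring
  have hcle : vv * s ≤ c := by
    rw [hcval]
    have h8 : r * κ ≤ (μ⁻¹ * spec Sstar) * r * (κ + ks) := by
      have h9 : 1 * (r * (κ + ks)) ≤ (μ⁻¹ * spec Sstar) * (r * (κ + ks)) :=
        mul_le_mul_of_nonneg_right hMrt (mul_nonneg hr0 (add_nonneg hκ0 hks0))
      linarith only [h9, mul_nonneg hr0 hks0]
    exact hkey.trans (add_le_add_right h8 _)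
  calc spec (P - Ps) = d := rfl
  _ ≤ δ * (vv * s) := hdle
  _ ≤ δ * c := mul_le_mul_of_nonneg_left hcle hδ0
  _ = c * δ := mul_comm _ _
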